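/- In a weight-balanced binary tree storing items with positive weights w_1,…,w_k of total weight W, item i can be stored at depth O(log(W/w_i)); in particular, there exists a binary tree with k leaves where leaf i has depth at most 2 + 2·log2(W/w_i). -/

import Mathlib

open Finset

noncomputable section
open scoped Classical

/-- A finite rooted tree on vertex set `V`: every vertex reaches the root by
iterating the parent map, and the root is its own parent. -/
structure RTree (V : Type) [Fintype V] [DecidableEq V] where
  root : V
  parent : V → V
  parent_root : parent root = root
  reaches_root : ∀ v, ∃ k, parent^[k] v = root

namespace RTree

variable {V : Type} [Fintype V] [DecidableEq V] (T : RTree V)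

/-- `u` is an ancestor of `v` (possibly `u = v`). -/
def Ancestor (u v : V) : Prop := ∃ k, T.parent^[k] v = u

/-- The depth of a vertex: its distance to the root. -/
def depth (v : V) : ℕ := Nat.find (T.reaches_root v)

/-- The height of the tree: the maximum depth. -/
def height : ℕ := Finset.univ.sup T.depth

/-- The number of descendants of `u` (including `u` itself). -/
def desc (u : V) : ℕ := (Finset.univ.filter (fun v => T.Ancestor u v)).card

/-- The tree is binary: every vertex has at most two children. -/
def Binary : Prop :=
  ∀ u : V, (Finset.univ.filter (fun v => v ≠ T.root ∧ T.parent v = u)).card ≤ 2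

/-- `x` is a leaf: it has no children. -/
def IsLeaf (x : V) : Prop := ∀ v : V, v ≠ T.root → T.parent v ≠ x

end RTree

namespace WBTaux


def J (n : ℕ) : ℕ := Nat.log 2 (n + 1)
def R (n : ℕ) : ℕ := n + 1 - 2 ^ J n
def addr (n : ℕ) : ℕ := 2 ^ (2 * J n + 2) - 2 ^ (J n + 1) + R n

lemma pow_J_le (n : ℕ) : 2 ^ J n ≤ n + 1 := Nat.pow_log_le_self 2 (Nat.succ_ne_zero n)

lemma lt_pow_J_succ (n : ℕ) : n + 1 < 2 ^ (J n + 1) := Nat.lt_pow_succ_log_self one_lt_two _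

lemma R_lt (n : ℕ) : R n < 2 ^ J n := by
  have h1 := pow_J_le n
  have h2 := lt_pow_J_succ n
  have h3 : (2:ℕ) ^ (J n + 1) = 2 ^ J n * 2 := pow_succ 2 (J n)
  unfold R
  omega

lemma addr_bounds (n : ℕ) : 2 ^ (2 * J n + 1) ≤ addr n ∧ addr n < 2 ^ (2 * J n + 2) := by
  have hR := R_lt n
  have h1 : (2:ℕ) ^ (2 * J n + 2) = 2 ^ (2 * J n + 1) * 2 := pow_succ _ _
  have h2 : (2:ℕ) ^ (J n + 1) ≤ 2 ^ (2 * J n + 1) := Nat.pow_le_pow_right (by norm_num) (by omega)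
  have h3 : (2:ℕ) ^ (J n) ≤ 2 ^ (J n + 1) := Nat.pow_le_pow_right (by norm_num) (by omega)
  unfold addr
  omega

lemma log_addr (n : ℕ) : Nat.log 2 (addr n) = 2 * J n + 1 :=
  Nat.log_eq_of_pow_le_of_lt_pow (addr_bounds n).1 (addr_bounds n).2

lemma two_le_addr (n : ℕ) : 2 ≤ addr n := by
  have h := (addr_bounds n).1
  calc (2:ℕ) = 2 ^ 1 := rfl
    _ ≤ 2 ^ (2 * J n + 1) := Nat.pow_le_pow_right (by norm_num) (by omega)
    _ ≤ addr n := h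

lemma addr_inj : Function.Injective addr := by
  intro n n' h
  have hj : J n = J n' := by
    have h1 := log_addr n
    have h2 := log_addr n'
    rw [h, h2] at h1
    omega
  have hR1 := R_lt n
  have hR2 := R_lt n'
  have hb : (2:ℕ) ^ (J n' + 1) ≤ 2 ^ (2 * J n' + 2) :=
    Nat.pow_le_pow_right (by norm_num) (by omega)
  unfold addr at h
  rw [hj] at h hR1
  have hr : R n = R n' := by omega
  have p1 := pow_J_le n
  have p2 := pow_J_le n'
  unfold R at hr
  rw [hj] at hr p1
  omega

/-- pure integer inequality used in the antichain proof -/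
lemma key_ineq (p c A A' r r' : ℤ) (hc : 2 ≤ c) (hr : r + 1 ≤ p)
    (hr0 : 0 ≤ r) (hr' : 0 ≤ r') (hA : A + 2 * p = 4 * (p * p) + r)
    (hA' : A' + 2 * (p * c) = 4 * ((p * c) * (p * c)) + r')
    (hlt : A' < c * c * A + c * c) : False := by
  have hmulA : c * c * A + 2 * p * (c * c) = 4 * (p * p) * (c * c) + r * (c * c) := by
    linear_combination (c * c) * hA
  have hc0 : (0:ℤ) ≤ c := by linarith
  have hp0 : (0:ℤ) ≤ p := by linarith
  have hint1 : (r + 1) * (c * c) ≤ p * (c * c) :=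
    mul_le_mul_of_nonneg_right hr (by positivity)
  have hint2 : 2 * (p * c) ≤ c * (p * c) :=
    mul_le_mul_of_nonneg_right hc (by positivity)
  nlinarith [hmulA, hint1, hint2, hA', hlt, hr']

lemma addr_antichain (n n' s : ℕ) (hs : 1 ≤ s) : addr n' / 2 ^ s ≠ addr n := by
  intro h
  obtain ⟨lb, ub⟩ := addr_bounds n
  obtain ⟨lb', ub'⟩ := addr_bounds n'
  have hspos : 0 < (2:ℕ) ^ s := Nat.pow_pos (by norm_num)
  have hmod := Nat.div_add_mod (addr n') (2 ^ s)
  have hmlt : addr n' % 2 ^ s < 2 ^ s := Nat.mod_lt _ hspos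
  rw [h] at hmod
  have hml : 2 ^ s * addr n ≤ addr n' := by omega
  have hmu : addr n' < 2 ^ s * addr n + 2 ^ s := by omega
  have h1 : 2 ^ (s + (2 * J n + 1)) ≤ addr n' := by
    rw [pow_add]
    exact le_trans (Nat.mul_le_mul_left _ lb) hml
  have h2 : addr n' < 2 ^ (s + (2 * J n + 2)) := by
    rw [pow_add]
    calc addr n' < 2 ^ s * addr n + 2 ^ s := hmu
      _ = 2 ^ s * (addr n + 1) := by ring
      _ ≤ 2 ^ s * 2 ^ (2 * J n + 2) := Nat.mul_le_mul_left _ (by omega)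
  have e1 : s + (2 * J n + 1) < 2 * J n' + 2 :=
    (Nat.pow_lt_pow_iff_right one_lt_two).mp (lt_of_le_of_lt h1 ub')
  have e2 : 2 * J n' + 1 < s + (2 * J n + 2) :=
    (Nat.pow_lt_pow_iff_right one_lt_two).mp (lt_of_le_of_lt lb' h2)
  have hjj : J n + 1 ≤ J n' := by omega
  have hseq : s = (J n' - J n) + (J n' - J n) := by omega
  have hq : (2:ℕ) ^ (J n') = 2 ^ (J n) * 2 ^ (J n' - J n) := by
    rw [← pow_add]
    congr 1
    omega
  have hcs : (2:ℕ) ^ s = 2 ^ (J n' - J n) * 2 ^ (J n' - J n) := by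
    rw [← pow_add, hseq]
  have hc2 : 2 ≤ (2:ℕ) ^ (J n' - J n) := by
    calc (2:ℕ) = 2 ^ 1 := rfl
      _ ≤ 2 ^ (J n' - J n) := Nat.pow_le_pow_right (by norm_num) (by omega)
  have hrp : R n + 1 ≤ 2 ^ (J n) := R_lt n
  have ha : addr n + 2 * 2 ^ J n = 4 * (2 ^ J n * 2 ^ J n) + R n := by
    have hR := R_lt n
    have hh1 : (2:ℕ) ^ (J n + 1) = 2 * 2 ^ J n := by rw [pow_succ]; ring
    have hh2 : (2:ℕ) ^ (2 * J n + 2) = 4 * (2 ^ J n * 2 ^ J n) := by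
      rw [show 2 * J n + 2 = (J n + 1) + (J n + 1) by ring, pow_add, hh1]; ring
    have h3 : 2 * 2 ^ J n ≤ 4 * (2 ^ J n * 2 ^ J n) := by
      have hp : 1 ≤ (2:ℕ) ^ J n := Nat.one_le_two_pow
      calc 2 * 2 ^ J n ≤ 4 * 2 ^ J n := by omega
        _ ≤ 4 * (2 ^ J n * 2 ^ J n) := by
            exact Nat.mul_le_mul_left _ (Nat.le_mul_of_pos_left _ hp)
    unfold addr
    omega
  have ha' : addr n' + 2 * 2 ^ J n' = 4 * (2 ^ J n' * 2 ^ J n') + R n' := by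
    have hR := R_lt n'
    have hh1 : (2:ℕ) ^ (J n' + 1) = 2 * 2 ^ J n' := by rw [pow_succ]; ring
    have hh2 : (2:ℕ) ^ (2 * J n' + 2) = 4 * (2 ^ J n' * 2 ^ J n') := by
      rw [show 2 * J n' + 2 = (J n' + 1) + (J n' + 1) by ring, pow_add, hh1]; ring
    have h3 : 2 * 2 ^ J n' ≤ 4 * (2 ^ J n' * 2 ^ J n') := by
      have hp : 1 ≤ (2:ℕ) ^ J n' := Nat.one_le_two_pow
      calc 2 * 2 ^ J n' ≤ 4 * 2 ^ J n' := by omega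
        _ ≤ 4 * (2 ^ J n' * 2 ^ J n') := by
            exact Nat.mul_le_mul_left _ (Nat.le_mul_of_pos_left _ hp)
    unfold addr
    omega
  rw [hq] at ha'
  rw [hcs] at hmu
  refine key_ineq (2 ^ J n : ℤ) (2 ^ (J n' - J n) : ℤ) (addr n) (addr n')
    (R n) (R n') ?_ ?_ ?_ ?_ ?_ ?_ ?_
  · exact_mod_cast hc2
  · exact_mod_cast hrp
  · positivity
  · positivity
  · exact_mod_cast ha
  · push_cast
    push_cast at ha'
    linarith [ha']
  · exact_mod_cast hmu




theorem tree_of_antichain (k : ℕ) (hk : 0 < k) (a : Fin k → ℕ)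
    (ha2 : ∀ i, 2 ≤ a i) (hainj : Function.Injective a)
    (hanti : ∀ i i' s, 1 ≤ s → a i' / 2 ^ s ≠ a i) :
    ∃ (m : ℕ) (B : RTree (Fin m)) (f : Fin k ↪ Fin m),
      B.Binary ∧ (∀ x : Fin m, B.IsLeaf x ↔ ∃ i, f i = x) ∧
      ∀ i : Fin k, B.depth (f i) = Nat.log 2 (a i) := by
  classical
  set V : Finset ℕ := Finset.univ.biUnion (fun i : Fin k =>
    ((Finset.range (a i + 1)).image (fun t => a i / 2 ^ t)).filter (fun ν => 1 ≤ ν))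
    with hVdef
  have memV : ∀ ν, ν ∈ V ↔ (1 ≤ ν ∧ ∃ i t, t ≤ a i ∧ a i / 2 ^ t = ν) := by
    intro ν
    simp only [hVdef, Finset.mem_biUnion, Finset.mem_filter, Finset.mem_image,
      Finset.mem_range, Finset.mem_univ, true_and, Nat.lt_succ_iff]
    constructor
    · rintro ⟨i, ⟨t, ht, hdiv⟩, h1⟩
      exact ⟨h1, i, t, ht, hdiv⟩
    · rintro ⟨h1, i, t, ht, hdiv⟩
      exact ⟨i, ⟨t, ht, hdiv⟩, h1⟩
  have i0 : Fin k := ⟨0, hk⟩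
  have hone : ∀ ν ∈ V, 1 ≤ ν := fun ν h => ((memV ν).mp h).1
  -- the root label 1 is in V
  have div_log : ∀ i, a i / 2 ^ Nat.log 2 (a i) = 1 := by
    intro i
    have h1 : 2 ^ Nat.log 2 (a i) ≤ a i :=
      Nat.pow_log_le_self 2 (by have := ha2 i; omega)
    have h2 : a i < 2 ^ (Nat.log 2 (a i) + 1) := Nat.lt_pow_succ_log_self one_lt_two _
    have h3 : (2:ℕ) ^ (Nat.log 2 (a i) + 1) = 2 ^ Nat.log 2 (a i) * 2 := pow_succ _ _
    have h4 : 1 * 2 ^ Nat.log 2 (a i) ≤ a i := by omega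
    have h5 : a i < (1 + 1) * 2 ^ Nat.log 2 (a i) := by omega
    exact Nat.div_eq_of_lt_le h4 h5
  have rootV : (1:ℕ) ∈ V := by
    rw [memV]
    refine ⟨le_refl 1, i0, Nat.log 2 (a i0), Nat.log_le_self _ _, div_log i0⟩
  have haV : ∀ i, a i ∈ V := by
    intro i
    rw [memV]
    exact ⟨by have := ha2 i; omega, i, 0, Nat.zero_le _, by simp⟩
  have closedV : ∀ ν ∈ V, 2 ≤ ν → ν / 2 ∈ V := by
    intro ν hν h2
    obtain ⟨h1, i, t, ht, hdiv⟩ := (memV ν).mp hν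
    rw [memV]
    have hd : 2 * 2 ^ t ≤ a i := by
      rw [← hdiv] at h2
      exact (Nat.le_div_iff_mul_le (Nat.pow_pos (by norm_num))).mp h2
    refine ⟨by omega, i, t + 1, ?_, ?_⟩
    · have h2t : t + 1 < 2 ^ (t + 1) := Nat.lt_two_pow_self (n := t + 1)
      have : (2:ℕ) ^ (t + 1) = 2 * 2 ^ t := by rw [pow_succ]; ring
      omega
    · rw [pow_succ, ← Nat.div_div_eq_div_mul, hdiv]
  -- no element of V is a strict descendant-child of any a i
  have noChild : ∀ i, ∀ μ ∈ V, 2 ≤ μ → μ / 2 ≠ a i := by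
    intro i μ hμ h2 heq
    obtain ⟨h1, i', t, ht, hdiv⟩ := (memV μ).mp hμ
    have : a i' / 2 ^ (t + 1) = a i := by
      rw [pow_succ, ← Nat.div_div_eq_div_mul, hdiv]
      exact heq
    exact hanti i i' (t + 1) (by omega) this
  -- every non-address element of V has a child in V
  have childOf : ∀ ν ∈ V, (∀ i, a i ≠ ν) → ∃ μ ∈ V, 2 ≤ μ ∧ μ / 2 = ν := by
    intro ν hν hno
    obtain ⟨h1, i, t, ht, hdiv⟩ := (memV ν).mp hν
    rcases Nat.eq_zero_or_pos t with rfl | htpos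
    · exact absurd (by simpa using hdiv) (hno i)
    · refine ⟨a i / 2 ^ (t - 1), ?_, ?_, ?_⟩
      · rw [memV]
        refine ⟨?_, i, t - 1, by omega, rfl⟩
        have : a i / 2 ^ (t - 1) / 2 = ν := by
          rw [Nat.div_div_eq_div_mul, ← pow_succ]
          rw [show t - 1 + 1 = t by omega]
          exact hdiv
        omega
      · have : a i / 2 ^ (t - 1) / 2 = ν := by
          rw [Nat.div_div_eq_div_mul, ← pow_succ, show t - 1 + 1 = t by omega]
          exact hdiv
        omega
      · rw [Nat.div_div_eq_div_mul, ← pow_succ, show t - 1 + 1 = t by omega]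
        exact hdiv
  -- the tree structure
  set m := V.card with hm
  set e : Fin m ≃o {x // x ∈ V} := V.orderIsoOfFin rfl with he
  set pstep : {x // x ∈ V} → {x // x ∈ V} := fun ν =>
    if h : (ν : ℕ) = 1 then ⟨1, rootV⟩
    else ⟨(ν : ℕ) / 2, closedV _ ν.2 (by have := hone _ ν.2; omega)⟩ with hpstep
  set par : Fin m → Fin m := fun x => e.symm (pstep (e x)) with hpar
  set rt : Fin m := e.symm ⟨1, rootV⟩ with hrt
  have iterpar : ∀ (t : ℕ) (x : Fin m), par^[t] x = e.symm (pstep^[t] (e x)) := by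
    intro t
    induction t with
    | zero => intro x; simp
    | succ t ih =>
      intro x
      rw [Function.iterate_succ_apply', Function.iterate_succ_apply', ih, hpar]
      simp
  have hstep : ∀ μ : {x // x ∈ V},
      ((pstep μ : {x // x ∈ V}) : ℕ) = if (μ : ℕ) = 1 then 1 else (μ : ℕ) / 2 := by
    intro μ
    rw [hpstep]
    by_cases h : (μ : ℕ) = 1 <;> simp [h]
  have pval : ∀ (t : ℕ) (ν : {x // x ∈ V}),
      ((pstep^[t] ν : {x // x ∈ V}) : ℕ) = max ((ν : ℕ) / 2 ^ t) 1 := by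
    intro t
    induction t with
    | zero =>
      intro ν
      have := hone _ ν.2
      simp only [Function.iterate_zero, id_eq, pow_zero, Nat.div_one]
      omega
    | succ t ih =>
      intro ν
      rw [Function.iterate_succ_apply', hstep]
      have hv := ih ν
      have hd : (ν : ℕ) / 2 ^ (t + 1) = ((ν : ℕ) / 2 ^ t) / 2 := by
        rw [Nat.div_div_eq_div_mul, ← pow_succ]
      have h1 : 1 ≤ ((pstep^[t] ν : {x // x ∈ V}) : ℕ) := hone _ (pstep^[t] ν).2
      split_ifs with hcase <;> omega
  -- parent fixes the root
  have hpstep_one : pstep ⟨1, rootV⟩ = ⟨1, rootV⟩ := Subtype.ext (by rw [hstep]; simp)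
  have hroot_par : par rt = rt := by
    rw [hpar, hrt]
    simp only [OrderIso.apply_symm_apply, hpstep_one]
  -- reaching the root
  have valpos : ∀ x : Fin m, 1 ≤ ((e x : {x // x ∈ V}) : ℕ) := fun x => hone _ (e x).2
  have hreachval : ∀ x : Fin m,
      pstep^[Nat.log 2 ((e x : {x // x ∈ V}) : ℕ)] (e x) = ⟨1, rootV⟩ := by
    intro x
    set ν := ((e x : {x // x ∈ V}) : ℕ) with hν
    apply Subtype.ext
    rw [pval]
    have hlt : ν < 2 ^ (Nat.log 2 ν + 1) := Nat.lt_pow_succ_log_self one_lt_two _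
    have hp : (2:ℕ) ^ (Nat.log 2 ν + 1) = 2 ^ Nat.log 2 ν * 2 := pow_succ _ _
    have := Nat.div_add_mod ν (2 ^ Nat.log 2 ν)
    have hm2 : ν % 2 ^ Nat.log 2 ν < 2 ^ Nat.log 2 ν :=
      Nat.mod_lt _ (Nat.pow_pos (by norm_num))
    have hle : ν / 2 ^ Nat.log 2 ν ≤ 1 := by
      rcases Nat.lt_or_ge (ν / 2 ^ Nat.log 2 ν) 2 with h | h
      · omega
      · exfalso
        have := Nat.mul_le_mul_left (2 ^ Nat.log 2 ν) h
        omega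
    rw [← hν, show ((⟨1, rootV⟩ : {x // x ∈ V}) : ℕ) = 1 from rfl]
    omega
  have hreach : ∀ x : Fin m, ∃ t, par^[t] x = rt := by
    intro x
    exact ⟨Nat.log 2 ((e x : {x // x ∈ V}) : ℕ), by rw [iterpar, hreachval, hrt]⟩
  set B : RTree (Fin m) := ⟨rt, par, hroot_par, hreach⟩ with hB
  -- depth formula
  have hdepth : ∀ x : Fin m, B.depth x = Nat.log 2 ((e x : {x // x ∈ V}) : ℕ) := by
    intro x
    set ν := ((e x : {x // x ∈ V}) : ℕ) with hν
    have hB2 : B.parent = par := rfl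
    have hB3 : B.root = rt := rfl
    rw [RTree.depth, Nat.find_eq_iff]
    constructor
    · rw [hB2, hB3, iterpar, hreachval, hrt]
    · intro t ht hEq
      rw [hB2, hB3, iterpar, hrt] at hEq
      have h2 : pstep^[t] (e x) = ⟨1, rootV⟩ := e.symm.injective hEq
      have h3 : ((pstep^[t] (e x) : {x // x ∈ V}) : ℕ) = 1 := Subtype.ext_iff.mp h2
      rw [pval, ← hν] at h3
      -- but ν / 2^t ≥ 2 since 2^(t+1) ≤ 2^log ≤ ν
      have hlog : 2 ^ (t + 1) ≤ ν := le_trans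
        (Nat.pow_le_pow_right (by norm_num) (by omega))
        (Nat.pow_log_le_self 2 (by have := valpos x; omega))
      have hdiv : 2 ≤ ν / 2 ^ t := by
        rw [Nat.le_div_iff_mul_le (Nat.pow_pos (by norm_num))]
        have : (2:ℕ) ^ (t+1) = 2 * 2 ^ t := by rw [pow_succ]; ring
        omega
      omega
  -- Binary
  have hbin : B.Binary := by
    intro u
    have hmap : ∀ v ∈ Finset.univ.filter (fun v => v ≠ B.root ∧ B.parent v = u),
        ((e v : {x // x ∈ V}) : ℕ) ∈ ({2 * ((e u : {x // x ∈ V}) : ℕ),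
          2 * ((e u : {x // x ∈ V}) : ℕ) + 1} : Finset ℕ) := by
      intro v hv
      rw [Finset.mem_filter] at hv
      obtain ⟨-, hne, hpv⟩ := hv
      have h1 : ((e v : {x // x ∈ V}) : ℕ) ≠ 1 := by
        intro hone1
        apply hne
        have : (e v : {x // x ∈ V}) = ⟨1, rootV⟩ := Subtype.ext hone1
        have := congrArg e.symm this
        rw [OrderIso.symm_apply_apply] at this
        rw [this, hB]
      have h2 : 2 ≤ ((e v : {x // x ∈ V}) : ℕ) := by have := valpos v; omega
      have hpar2 : pstep (e v) = e u := by
        have : e.symm (pstep (e v)) = u := hpv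
        have := congrArg e this
        rwa [OrderIso.apply_symm_apply] at this
      have h3 : ((pstep (e v) : {x // x ∈ V}) : ℕ) = ((e u : {x // x ∈ V}) : ℕ) :=
        Subtype.ext_iff.mp hpar2
      rw [hstep] at h3
      simp only [h1, if_false] at h3
      simp only [Finset.mem_insert, Finset.mem_singleton]
      omega
    have hinjOn : Set.InjOn (fun v => ((e v : {x // x ∈ V}) : ℕ))
        (Finset.univ.filter (fun v => v ≠ B.root ∧ B.parent v = u)) := by
      intro v1 _ v2 _ hvv
      exact e.injective (Subtype.ext hvv)
    calc (Finset.univ.filter (fun v => v ≠ B.root ∧ B.parent v = u)).card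
        ≤ ({2 * ((e u : {x // x ∈ V}) : ℕ), 2 * ((e u : {x // x ∈ V}) : ℕ) + 1} :
            Finset ℕ).card := Finset.card_le_card_of_injOn _ hmap hinjOn
      _ ≤ 2 := Finset.card_insert_le _ _ |>.trans (by simp)
  -- the embedding
  have hfinj : Function.Injective (fun i : Fin k => e.symm ⟨a i, haV i⟩) := by
    intro i i' hii
    have := congrArg e hii
    rw [OrderIso.apply_symm_apply, OrderIso.apply_symm_apply] at this
    exact hainj (congrArg Subtype.val this)
  set f : Fin k ↪ Fin m := ⟨fun i => e.symm ⟨a i, haV i⟩, hfinj⟩ with hf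
  have hef : ∀ i, (e (f i) : {x // x ∈ V}) = ⟨a i, haV i⟩ := by
    intro i
    rw [hf]
    exact e.apply_symm_apply _
  -- leaves
  have hleaf : ∀ x : Fin m, B.IsLeaf x ↔ ∃ i, f i = x := by
    intro x
    constructor
    · intro hlf
      by_contra hno
      push_neg at hno
      have hnoa : ∀ i, a i ≠ ((e x : {x // x ∈ V}) : ℕ) := by
        intro i hai
        apply hno i
        have : (⟨a i, haV i⟩ : {x // x ∈ V}) = e x := Subtype.ext hai
        rw [hf]
        simp only [Function.Embedding.coeFn_mk, this, OrderIso.symm_apply_apply]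
      obtain ⟨μ, hμV, hμ2, hμd⟩ := childOf _ (e x).2 hnoa
      have : ∃ v : Fin m, (e v : {x // x ∈ V}) = ⟨μ, hμV⟩ :=
        ⟨e.symm ⟨μ, hμV⟩, e.apply_symm_apply _⟩
      obtain ⟨v, hv⟩ := this
      apply hlf v
      · intro hvr
        have : (e v : {x // x ∈ V}) = ⟨1, rootV⟩ := by
          rw [hvr, show B.root = rt from rfl, hrt]
          exact e.apply_symm_apply _
        have hμ1 : μ = 1 := by
          have h9 := Subtype.ext_iff.mp (hv.symm.trans this)
          simpa using h9
        omega
      · show e.symm (pstep (e v)) = x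
        have : pstep (e v) = e x := by
          apply Subtype.ext
          rw [hstep, hv]
          have : (μ : ℕ) ≠ 1 := by omega
          simp only [this, if_false]
          exact hμd
        rw [this, OrderIso.symm_apply_apply]
    · rintro ⟨i, rfl⟩
      intro v hvne hpv
      have hv2 : 2 ≤ ((e v : {x // x ∈ V}) : ℕ) := by
        have h1 : ((e v : {x // x ∈ V}) : ℕ) ≠ 1 := by
          intro hone1
          apply hvne
          have : (e v : {x // x ∈ V}) = ⟨1, rootV⟩ := Subtype.ext hone1
          have := congrArg e.symm this
          rw [OrderIso.symm_apply_apply] at this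
          rw [this, hB]
        have := valpos v
        omega
      have hpar2 : pstep (e v) = e (f i) := by
        have : e.symm (pstep (e v)) = f i := hpv
        have := congrArg e this
        rwa [OrderIso.apply_symm_apply] at this
      rw [hef i] at hpar2
      have h3 : ((pstep (e v) : {x // x ∈ V}) : ℕ) = a i := Subtype.ext_iff.mp hpar2
      rw [hstep] at h3
      have h1 : ((e v : {x // x ∈ V}) : ℕ) ≠ 1 := by omega
      simp only [h1, if_false] at h3
      exact noChild i _ (e v).2 hv2 h3
  refine ⟨m, B, f, hbin, hleaf, ?_⟩
  intro i
  rw [hdepth, hef]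

end WBTaux

/-- Weight-balanced binary trees exist: for positive weights
`w 0, …, w (k-1)` of total weight `W`, there is a binary tree whose leaves are exactly
the `k` items, with item `i` stored at depth at most `2 + 2 * log₂ (W / w i)`. -/
theorem weight_balanced_tree_exists (k : ℕ) (hk : 0 < k) (w : Fin k → ℝ)
    (hw : ∀ i, 0 < w i) :
    ∃ (m : ℕ) (B : RTree (Fin m)) (f : Fin k ↪ Fin m),
      B.Binary ∧ (∀ x : Fin m, B.IsLeaf x ↔ ∃ i, f i = x) ∧
      ∀ i : Fin k,
        (B.depth (f i) : ℝ) ≤ 2 + 2 * Real.logb 2 ((∑ j, w j) / w i) := by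
  classical
  set W := ∑ j, w j with hWdef
  have hWpos : 0 < W := Finset.sum_pos (fun i _ => hw i) ⟨⟨0, hk⟩, Finset.mem_univ _⟩
  set σ := Tuple.sort w with hσ
  set idx : Fin k → ℕ := fun i => k - 1 - ((σ.symm i : ℕ)) with hidx
  have hidxlt : ∀ i, (σ.symm i : ℕ) < k := fun i => (σ.symm i).isLt
  have hidxinj : Function.Injective idx := by
    intro i i' h
    have h1 := hidxlt i
    have h2 := hidxlt i'
    simp only [hidx] at h
    have : (σ.symm i : ℕ) = (σ.symm i' : ℕ) := by omega
    exact σ.symm.injective (Fin.ext this)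
  have hweight : ∀ i, ((idx i + 1 : ℕ) : ℝ) * w i ≤ W := by
    intro i
    set p := σ.symm i with hp
    have hplt : (p : ℕ) < k := hidxlt i
    have hidx1 : idx i + 1 = k - (p : ℕ) := by simp only [hidx]; omega
    have hcard : (Finset.Ici p).card = k - (p : ℕ) := Fin.card_Ici p
    have hmono := Tuple.monotone_sort w
    rw [← hσ] at hmono
    have hlow : ∀ q ∈ Finset.Ici p, w i ≤ w (σ q) := by
      intro q hq
      have h5 := hmono (Finset.mem_Ici.mp hq)
      simpa [hp, Equiv.apply_symm_apply] using h5
    have h1 : (Finset.Ici p).card • w i ≤ ∑ q ∈ Finset.Ici p, w (σ q) :=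
      Finset.card_nsmul_le_sum _ _ _ hlow
    have h2 : ∑ q ∈ Finset.Ici p, w (σ q) ≤ ∑ q, w (σ q) :=
      Finset.sum_le_sum_of_subset_of_nonneg (Finset.subset_univ _)
        (fun q _ _ => (hw _).le)
    have h3 : ∑ q, w (σ q) = W := Equiv.sum_comp σ w
    rw [hcard, nsmul_eq_mul] at h1
    rw [hidx1]
    calc ((k - (p : ℕ) : ℕ) : ℝ) * w i ≤ ∑ q ∈ Finset.Ici p, w (σ q) := h1
      _ ≤ W := by rw [← h3] at *; exact h2
  have hlog : ∀ (i : Fin k) (J : ℕ), 2 ^ J ≤ idx i + 1 →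
      (J : ℝ) ≤ Real.logb 2 (W / w i) := by
    intro i J hJ
    have hJr : ((2:ℝ)) ^ J ≤ W / w i := by
      rw [le_div_iff₀ (hw i)]
      calc (2:ℝ) ^ J * w i ≤ ((idx i + 1 : ℕ) : ℝ) * w i := by
            apply mul_le_mul_of_nonneg_right _ (hw i).le
            exact_mod_cast hJ
        _ ≤ W := hweight i
    have h1 : Real.logb 2 ((2:ℝ) ^ J) = J := by
      rw [Real.logb_pow, Real.logb_self_eq_one (by norm_num), mul_one]
    rw [← h1]
    exact (Real.logb_le_logb one_lt_two (by positivity) (div_pos hWpos (hw i))).mpr hJr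
  obtain ⟨m, B, f, hbin, hleaf, hdep⟩ :=
    WBTaux.tree_of_antichain k hk (fun i => WBTaux.addr (idx i))
      (fun i => WBTaux.two_le_addr _)
      (fun i i' h => hidxinj (WBTaux.addr_inj h))
      (fun i i' s hs => WBTaux.addr_antichain _ _ s hs)
  refine ⟨m, B, f, hbin, hleaf, ?_⟩
  intro i
  rw [hdep i, WBTaux.log_addr]
  have hbound := hlog i (WBTaux.J (idx i)) (WBTaux.pow_J_le (idx i))
  push_cast
  linarith
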